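/- For every x ∈ [278/665, 34/81), one has σ²(x) < σ²(c). -/

import Mathlib

open scoped BigOperators

/-- `V x ξ = min x ξ - x * ξ`. -/
noncomputable def V (x ξ : ℝ) : ℝ := min x ξ - x * ξ

/-- `σ²(x) = V(⟨x⟩, ⟨x⟩) + 2 ∑_{k=1}^∞ 6^{-k} V(⟨2^k x⟩, ⟨3^k x⟩)`. -/
noncomputable def sigmaSq (x : ℝ) : ℝ :=
  V (Int.fract x) (Int.fract x) +
    2 * ∑' k : ℕ, (1 / 6 ^ (k + 1) : ℝ) *
      V (Int.fract ((2 : ℝ) ^ (k + 1) * x)) (Int.fract ((3 : ℝ) ^ (k + 1) * x))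

/-- `c = 277/665 = 277/(3^6 - 2^6)`. -/
noncomputable def c : ℝ := 277 / 665

/-- The summand of `sigmaSq`. -/
noncomputable def g (x : ℝ) (k : ℕ) : ℝ :=
  (1 / 6 ^ (k + 1) : ℝ) *
      V (Int.fract ((2 : ℝ) ^ (k + 1) * x)) (Int.fract ((3 : ℝ) ^ (k + 1) * x))

lemma fract_eq (n : ℤ) {y r : ℝ} (h : y = n + r) (h0 : 0 ≤ r) (h1 : r < 1) :
    Int.fract y = r := by
  rw [h, Int.fract_intCast_add, Int.fract_eq_self.mpr ⟨h0, h1⟩]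

lemma V_nonneg' {a b : ℝ} (ha : 0 ≤ a) (hb : 0 ≤ b) (ha1 : a ≤ 1) (hb1 : b ≤ 1) :
    0 ≤ V a b := by
  unfold V
  rcases le_total a b with h | h
  · rw [min_eq_left h]; nlinarith
  · rw [min_eq_right h]; nlinarith

lemma V_le_quarter {a b : ℝ} (ha : 0 ≤ a) (hb : 0 ≤ b) (ha1 : a ≤ 1) (hb1 : b ≤ 1) :
    V a b ≤ 1 / 4 := by
  unfold V
  rcases le_total a b with h | h
  · rw [min_eq_left h]
    nlinarith [sq_nonneg (2*a - 1), mul_nonneg ha (sub_nonneg.2 h)]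
  · rw [min_eq_right h]
    nlinarith [sq_nonneg (2*b - 1), mul_nonneg hb (sub_nonneg.2 h)]

lemma g_nonneg (x : ℝ) (k : ℕ) : 0 ≤ g x k := by
  unfold g
  have h6 : (0:ℝ) < 6 ^ (k + 1) := by positivity
  refine mul_nonneg (by positivity) (V_nonneg' (Int.fract_nonneg _) (Int.fract_nonneg _)
    (Int.fract_lt_one _).le (Int.fract_lt_one _).le)

lemma g_le (x : ℝ) (k : ℕ) : g x k ≤ (1 / 4 : ℝ) * (1 / 6) ^ (k + 1) := by
  unfold g
  have h6 : (0:ℝ) < 6 ^ (k + 1) := by positivity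
  have hV : V (Int.fract ((2 : ℝ) ^ (k + 1) * x)) (Int.fract ((3 : ℝ) ^ (k + 1) * x)) ≤ 1 / 4 :=
    V_le_quarter (Int.fract_nonneg _) (Int.fract_nonneg _)
      (Int.fract_lt_one _).le (Int.fract_lt_one _).le
  calc (1 / 6 ^ (k + 1) : ℝ) * _ ≤ (1 / 6 ^ (k + 1) : ℝ) * (1 / 4) := by
        exact mul_le_mul_of_nonneg_left hV (by positivity)
    _ = (1 / 4 : ℝ) * (1 / 6) ^ (k + 1) := by rw [one_div_pow]; ring

lemma summable_bound (m : ℕ) : Summable (fun k : ℕ => (1 / 4 : ℝ) * (1 / 6) ^ (k + m)) := by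
  have : Summable (fun k : ℕ => ((1 / 6 : ℝ)) ^ k) :=
    summable_geometric_of_lt_one (by norm_num) (by norm_num)
  have h := (this.mul_left ((1 / 4 : ℝ) * (1 / 6) ^ m))
  refine h.congr fun k => ?_
  rw [pow_add]; ring

lemma summable_g (x : ℝ) : Summable (g x) :=
  Summable.of_nonneg_of_le (g_nonneg x) (g_le x) (summable_bound 1)

lemma tail_le (x : ℝ) : ∑' k : ℕ, g x (k + 5) ≤ 1 / 155520 := by
  have h1 : ∑' k : ℕ, g x (k + 5) ≤ ∑' k : ℕ, (1 / 4 : ℝ) * (1 / 6) ^ (k + 6) := by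
    refine Summable.tsum_le_tsum (fun k => ?_) ((summable_nat_add_iff 5).mpr (summable_g x))
      (summable_bound 6)
    have := g_le x (k + 5)
    calc g x (k + 5) ≤ (1 / 4 : ℝ) * (1 / 6) ^ (k + 5 + 1) := this
      _ = (1 / 4 : ℝ) * (1 / 6) ^ (k + 6) := by norm_num
  have h2 : ∑' k : ℕ, (1 / 4 : ℝ) * (1 / 6) ^ (k + 6) = 1 / 155520 := by
    have he : ∀ k : ℕ, (1 / 4 : ℝ) * (1 / 6) ^ (k + 6) =
        ((1 / 4 : ℝ) * (1 / 6) ^ 6) * (1 / 6) ^ k := by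
      intro k; rw [pow_add]; ring
    rw [tsum_congr he, tsum_mul_left, tsum_geometric_of_lt_one (by norm_num) (by norm_num)]
    norm_num
  linarith

lemma tail_nonneg (x : ℝ) : 0 ≤ ∑' k : ℕ, g x (k + 5) :=
  tsum_nonneg fun k => g_nonneg x _

lemma sigmaSq_eq (x : ℝ) :
    sigmaSq x = V (Int.fract x) (Int.fract x) +
      2 * ((∑ k ∈ Finset.range 5, g x k) + ∑' k : ℕ, g x (k + 5)) := by
  rw [Summable.sum_add_tsum_nat_add 5 (summable_g x)]
  rfl

lemma sum5_x (x : ℝ) (h1 : (278/665 : ℝ) ≤ x) (h2 : x < (34/81 : ℝ)) :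
    ∑ k ∈ Finset.range 5, g x k =
      (1/6) * ((3*x - 1) - (2*x) * (3*x - 1))
      + (1/36) * ((4*x - 1) - (4*x - 1) * (9*x - 3))
      + (1/216) * ((27*x - 11) - (8*x - 3) * (27*x - 11))
      + (1/1296) * ((16*x - 6) - (16*x - 6) * (81*x - 33))
      + (1/7776) * ((32*x - 13) - (32*x - 13) * (243*x - 101)) := by
  have e20 : Int.fract ((2:ℝ) ^ (0+1) * x) = 2*x :=
    fract_eq 0 (by push_cast; ring) (by linarith) (by linarith)
  have e30 : Int.fract ((3:ℝ) ^ (0+1) * x) = 3*x - 1 :=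
    fract_eq 1 (by push_cast; ring) (by linarith) (by linarith)
  have e21 : Int.fract ((2:ℝ) ^ (1+1) * x) = 4*x - 1 :=
    fract_eq 1 (by push_cast; ring) (by linarith) (by linarith)
  have e31 : Int.fract ((3:ℝ) ^ (1+1) * x) = 9*x - 3 :=
    fract_eq 3 (by push_cast; ring) (by linarith) (by linarith)
  have e22 : Int.fract ((2:ℝ) ^ (2+1) * x) = 8*x - 3 :=
    fract_eq 3 (by push_cast; ring) (by linarith) (by linarith)
  have e32 : Int.fract ((3:ℝ) ^ (2+1) * x) = 27*x - 11 :=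
    fract_eq 11 (by push_cast; ring) (by linarith) (by linarith)
  have e23 : Int.fract ((2:ℝ) ^ (3+1) * x) = 16*x - 6 :=
    fract_eq 6 (by push_cast; ring) (by linarith) (by linarith)
  have e33 : Int.fract ((3:ℝ) ^ (3+1) * x) = 81*x - 33 :=
    fract_eq 33 (by push_cast; ring) (by linarith) (by linarith)
  have e24 : Int.fract ((2:ℝ) ^ (4+1) * x) = 32*x - 13 :=
    fract_eq 13 (by push_cast; ring) (by linarith) (by linarith)
  have e34 : Int.fract ((3:ℝ) ^ (4+1) * x) = 243*x - 101 :=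
    fract_eq 101 (by push_cast; ring) (by linarith) (by linarith)
  have m0 : min (2*x) (3*x - 1) = 3*x - 1 := min_eq_right (by linarith)
  have m1 : min (4*x - 1) (9*x - 3) = 4*x - 1 := min_eq_left (by linarith)
  have m2 : min (8*x - 3) (27*x - 11) = 27*x - 11 := min_eq_right (by linarith)
  have m3 : min (16*x - 6) (81*x - 33) = 16*x - 6 := min_eq_left (by linarith)
  have m4 : min (32*x - 13) (243*x - 101) = 32*x - 13 := min_eq_left (by linarith)
  rw [Finset.sum_range_succ, Finset.sum_range_succ,
    Finset.sum_range_succ, Finset.sum_range_succ, Finset.sum_range_succ,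
    Finset.sum_range_zero]
  unfold g V
  rw [e20, e30, e21, e31, e22, e32, e23, e33, e24, e34, m0, m1, m2, m3, m4]
  norm_num
  all_goals ring

lemma sum5_c :
    ∑ k ∈ Finset.range 5, g c k = 268783/21492135 := by
  have e20 : Int.fract ((2:ℝ) ^ (0+1) * c) = 554/665 :=
    fract_eq 0 (by unfold c; push_cast; ring) (by norm_num) (by norm_num)
  have e30 : Int.fract ((3:ℝ) ^ (0+1) * c) = 166/665 :=
    fract_eq 1 (by unfold c; push_cast; ring) (by norm_num) (by norm_num)
  have e21 : Int.fract ((2:ℝ) ^ (1+1) * c) = 443/665 :=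
    fract_eq 1 (by unfold c; push_cast; ring) (by norm_num) (by norm_num)
  have e31 : Int.fract ((3:ℝ) ^ (1+1) * c) = 498/665 :=
    fract_eq 3 (by unfold c; push_cast; ring) (by norm_num) (by norm_num)
  have e22 : Int.fract ((2:ℝ) ^ (2+1) * c) = 221/665 :=
    fract_eq 3 (by unfold c; push_cast; ring) (by norm_num) (by norm_num)
  have e32 : Int.fract ((3:ℝ) ^ (2+1) * c) = 164/665 :=
    fract_eq 11 (by unfold c; push_cast; ring) (by norm_num) (by norm_num)
  have e23 : Int.fract ((2:ℝ) ^ (3+1) * c) = 442/665 :=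
    fract_eq 6 (by unfold c; push_cast; ring) (by norm_num) (by norm_num)
  have e33 : Int.fract ((3:ℝ) ^ (3+1) * c) = 492/665 :=
    fract_eq 33 (by unfold c; push_cast; ring) (by norm_num) (by norm_num)
  have e24 : Int.fract ((2:ℝ) ^ (4+1) * c) = 219/665 :=
    fract_eq 13 (by unfold c; push_cast; ring) (by norm_num) (by norm_num)
  have e34 : Int.fract ((3:ℝ) ^ (4+1) * c) = 146/665 :=
    fract_eq 101 (by unfold c; push_cast; ring) (by norm_num) (by norm_num)
  have m0 : min (554/665 : ℝ) (166/665) = 166/665 := min_eq_right (by norm_num)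
  have m1 : min (443/665 : ℝ) (498/665) = 443/665 := min_eq_left (by norm_num)
  have m2 : min (221/665 : ℝ) (164/665) = 164/665 := min_eq_right (by norm_num)
  have m3 : min (442/665 : ℝ) (492/665) = 442/665 := min_eq_left (by norm_num)
  have m4 : min (219/665 : ℝ) (146/665) = 146/665 := min_eq_right (by norm_num)
  rw [Finset.sum_range_succ, Finset.sum_range_succ,
    Finset.sum_range_succ, Finset.sum_range_succ, Finset.sum_range_succ,
    Finset.sum_range_zero]
  unfold g V
  rw [e20, e30, e21, e31, e22, e32, e23, e33, e24, e34, m0, m1, m2, m3, m4]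
  norm_num

theorem sigmaSq_lt_on_interval_14 (x : ℝ) (hx : x ∈ Set.Ico (278/665 : ℝ) (34/81)) :
    sigmaSq x < sigmaSq c := by
  obtain ⟨h1, h2⟩ := hx
  have hfx : Int.fract x = x := Int.fract_eq_self.mpr ⟨by linarith, by linarith⟩
  have hfc : Int.fract c = c := Int.fract_eq_self.mpr ⟨by unfold c; norm_num,
    by unfold c; norm_num⟩
  have hVx : V (Int.fract x) (Int.fract x) = x - x * x := by
    rw [hfx]; unfold V; rw [min_self]
  have hVc : V (Int.fract c) (Int.fract c) = 277/665 - (277/665) * (277/665) := by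
    rw [hfc]; unfold V; rw [min_self]; unfold c; norm_num
  have hx5 := sum5_x x h1 h2
  have hc5 := sum5_c
  have htx := tail_le x
  have htc := tail_nonneg c
  rw [sigmaSq_eq x, sigmaSq_eq c, hVx, hVc, hx5, hc5]
  nlinarith [sq_nonneg (x - 278/665), htx, htc]
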